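/- arXiv:2010.09174 — 5 statements merged into one kernel-verified Lean document; each statement's English description precedes it below -/
import Mathlib

section
/- Under the GP posterior setup, suppose the observations satisfy Y_i = ⟪φ(θ_i), w⟫ + ε_i for some w ∈ E with ‖w‖ ≤ B and noise satisfying |ε_i| ≤ η for i = 1, …, N. Then Yᵀ (K + η² I_N)⁻¹ Y ≤ B² + N; in particular B² + N − Yᵀ (K + η² I_N)⁻¹ Y ≥ 0, so the confidence-width parameter β = √(B² + N − Yᵀ (K + η² I_N)⁻¹ Y) is a well-defined nonnegative real number. -/
open Matrix RealInnerProductSpace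

/-- Under the GP posterior setup, if the observations satisfy
`Y_i = ⟪φ(θ_i), w⟫ + ε_i` with `‖w‖ ≤ B` and `|ε_i| ≤ η`, then
`Yᵀ (K + η² I_N)⁻¹ Y ≤ B² + N`; in particular
`B² + N − Yᵀ (K + η² I_N)⁻¹ Y ≥ 0`, so the confidence-width parameter
`β = √(B² + N − Yᵀ (K + η² I_N)⁻¹ Y)` is a well-defined nonnegative real. -/
theorem gp_quadratic_form_bound
    {Θ : Type*} [Nonempty Θ] {E : Type*}
    [NormedAddCommGroup E] [InnerProductSpace ℝ E] [CompleteSpace E]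
    (φ : Θ → E) (k : Θ → Θ → ℝ)
    (hk : ∀ θ θ' : Θ, k θ θ' = ⟪φ θ, φ θ'⟫)
    {N : ℕ} (θi : Fin N → Θ)
    (K : Matrix (Fin N) (Fin N) ℝ)
    (hK : ∀ i j, K i j = k (θi i) (θi j))
    (η : ℝ) (hη : 0 < η)
    (Y : Fin N → ℝ) (w : E) (B : ℝ) (hw : ‖w‖ ≤ B)
    (ε : Fin N → ℝ) (hε : ∀ i, |ε i| ≤ η)
    (hY : ∀ i, Y i = ⟪φ (θi i), w⟫ + ε i) :
    Y ⬝ᵥ ((K + η ^ 2 • 1)⁻¹ *ᵥ Y) ≤ B ^ 2 + N ∧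
      0 ≤ B ^ 2 + N - Y ⬝ᵥ ((K + η ^ 2 • 1)⁻¹ *ᵥ Y) := by
  set A : Matrix (Fin N) (Fin N) ℝ := K + η ^ 2 • 1 with hA
  have hquad : ∀ x : Fin N → ℝ,
      x ⬝ᵥ (K *ᵥ x) = ⟪∑ i, x i • φ (θi i), ∑ j, x j • φ (θi j)⟫ := by
    intro x
    rw [sum_inner]
    simp only [dotProduct, mulVec, dotProduct]
    refine Finset.sum_congr rfl fun i _ => ?_
    rw [inner_sum, Finset.mul_sum]
    refine Finset.sum_congr rfl fun j _ => ?_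
    rw [real_inner_smul_left, real_inner_smul_right, hK, hk]
    ring
  have hKps : K.PosSemidef := by
    rw [posSemidef_iff_dotProduct_mulVec]
    refine ⟨?_, fun x => ?_⟩
    · ext i j
      simp only [conjTranspose_apply, star_trivial, hK, hk]
      exact real_inner_comm _ _
    · simp only [star_trivial]
      rw [hquad]
      exact real_inner_self_nonneg
  have hsm : (η ^ 2 • 1 : Matrix (Fin N) (Fin N) ℝ).PosDef := by
    rw [posDef_iff_dotProduct_mulVec]
    refine ⟨?_, fun x hx => ?_⟩
    · ext i j
      simp only [conjTranspose_apply, Matrix.smul_apply, Matrix.one_apply, star_trivial]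
      by_cases h : i = j
      · simp [h]
      · simp [h, Ne.symm h]
    · simp only [star_trivial, smul_mulVec, one_mulVec, dotProduct_smul, smul_eq_mul]
      have hxx : 0 < x ⬝ᵥ x := by
        have := dotProduct_star_self_pos_iff (v := x) |>.mpr hx
        simpa using this
      positivity
  have hApd : A.PosDef := Matrix.PosDef.posSemidef_add hKps hsm
  have hdet : IsUnit A.det := hApd.det_pos.ne'.isUnit
  set v : Fin N → ℝ := A⁻¹ *ᵥ Y with hv
  have hAv : A *ᵥ v = Y := by
    rw [hv, Matrix.mulVec_mulVec, Matrix.mul_nonsing_inv _ hdet, Matrix.one_mulVec]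
  set s : E := ∑ i, v i • φ (θi i) with hs
  have h1 : v ⬝ᵥ Y = ‖s‖ ^ 2 + η ^ 2 * (v ⬝ᵥ v) := by
    rw [← hAv, hA, add_mulVec, dotProduct_add, smul_mulVec, one_mulVec,
      dotProduct_smul, smul_eq_mul, hquad v, ← hs, real_inner_self_eq_norm_sq]
  have h2 : v ⬝ᵥ Y = ⟪s, w⟫ + v ⬝ᵥ ε := by
    rw [hs, sum_inner]
    simp only [dotProduct, hY, real_inner_smul_left, mul_add, Finset.sum_add_distrib]
  have hsw : ⟪s, w⟫ ≤ (‖s‖ ^ 2 + B ^ 2) / 2 := by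
    have h3 : ⟪s, w⟫ ≤ ‖s‖ * ‖w‖ := real_inner_le_norm s w
    have h4 : ‖s‖ * ‖w‖ ≤ ‖s‖ * B := mul_le_mul_of_nonneg_left hw (norm_nonneg s)
    nlinarith [sq_nonneg (‖s‖ - B)]
  have hve : v ⬝ᵥ ε ≤ (η ^ 2 * (v ⬝ᵥ v) + N) / 2 := by
    have hterm : ∀ i, v i * ε i ≤ (η ^ 2 * (v i * v i) + 1) / 2 := by
      intro i
      have h5 : v i * ε i ≤ |v i| * η := by
        calc v i * ε i ≤ |v i * ε i| := le_abs_self _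
          _ = |v i| * |ε i| := abs_mul _ _
          _ ≤ |v i| * η := mul_le_mul_of_nonneg_left (hε i) (abs_nonneg _)
      nlinarith [sq_nonneg (η * |v i| - 1), sq_abs (v i)]
    calc v ⬝ᵥ ε = ∑ i, v i * ε i := rfl
      _ ≤ ∑ i, (η ^ 2 * (v i * v i) + 1) / 2 := Finset.sum_le_sum fun i _ => hterm i
      _ = (η ^ 2 * (v ⬝ᵥ v) + N) / 2 := by
          rw [← Finset.sum_div, Finset.sum_add_distrib, ← Finset.mul_sum,
            Finset.sum_const, Finset.card_univ, Fintype.card_fin, nsmul_eq_mul, mul_one]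
          rfl
  have hmain : v ⬝ᵥ Y ≤ B ^ 2 + N := by
    have := h1
    have := h2
    linarith [h1, h2, hsw, hve]
  have hfinal : Y ⬝ᵥ (A⁻¹ *ᵥ Y) ≤ B ^ 2 + N := by
    have : Y ⬝ᵥ (A⁻¹ *ᵥ Y) = v ⬝ᵥ Y := by rw [hv, dotProduct_comm]
    linarith [hmain, this.le, this.ge]
  exact ⟨hfinal, by linarith⟩
end

section
/- Under the GP posterior setup, work in the augmented Hilbert space E × ℝ^N with inner product ⟪(a, x), (b, y)⟫ = ⟪a, b⟫_E + xᵀy, and set ṽ_i = (φ(θ_i), η e_i), where e_i ∈ ℝ^N is the i-th standard basis vector. Then: (i) the Gram matrix of ṽ₁, …, ṽ_N equals K + η² I_N; and (ii) for every θ ∈ Θ, the squared distance of the point (φ(θ), 0) from span{ṽ₁, …, ṽ_N} equals the posterior variance, i.e., ‖(φ(θ), 0) − P (φ(θ), 0)‖² = σ²(θ), where P is the orthogonal projection onto span{ṽ₁, …, ṽ_N}. -/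
set_option synthInstance.maxHeartbeats 800000

open Matrix RealInnerProductSpace

/-- In the augmented Hilbert space `E × ℝ^N` (with the product
inner product), setting `ṽ_i = (φ(θ_i), η e_i)`: (i) the Gram matrix of the
`ṽ_i` equals `K + η² I_N`; and (ii) for every `θ`, the squared distance of
`(φ(θ), 0)` from `span{ṽ₁, …, ṽ_N}` equals the posterior variance `σ²(θ)`. -/
theorem gp_augmented_gram_and_variance
    {Θ : Type*} [Nonempty Θ] {E : Type*}
    [NormedAddCommGroup E] [InnerProductSpace ℝ E] [CompleteSpace E]
    (φ : Θ → E) (k : Θ → Θ → ℝ)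
    (hk : ∀ θ θ' : Θ, k θ θ' = ⟪φ θ, φ θ'⟫)
    {N : ℕ} (θi : Fin N → Θ)
    (K : Matrix (Fin N) (Fin N) ℝ)
    (hK : ∀ i j, K i j = k (θi i) (θi j))
    (kstar : Θ → Fin N → ℝ)
    (hkstar : ∀ θ i, kstar θ i = k θ (θi i))
    (η : ℝ) (hη : 0 < η)
    (σsq : Θ → ℝ)
    (hσ : ∀ θ, σsq θ = k θ θ - kstar θ ⬝ᵥ ((K + η ^ 2 • 1)⁻¹ *ᵥ kstar θ))
    (vt : Fin N → WithLp 2 (E × EuclideanSpace ℝ (Fin N)))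
    (hvt : ∀ i, vt i = (WithLp.equiv 2 (E × EuclideanSpace ℝ (Fin N))).symm
      (φ (θi i), η • EuclideanSpace.single i (1 : ℝ))) :
    (∀ i j, ⟪vt i, vt j⟫ = (K + η ^ 2 • 1) i j) ∧
      haveI : FiniteDimensional ℝ (Submodule.span ℝ (Set.range vt)) :=
        FiniteDimensional.span_of_finite ℝ (Set.finite_range vt)
      ∀ θ : Θ,
        ‖(WithLp.equiv 2 (E × EuclideanSpace ℝ (Fin N))).symm (φ θ, 0) -
            (Submodule.orthogonalProjectionOnto (Submodule.span ℝ (Set.range vt))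
              ((WithLp.equiv 2 (E × EuclideanSpace ℝ (Fin N))).symm (φ θ, 0)) :
              WithLp 2 (E × EuclideanSpace ℝ (Fin N)))‖ ^ 2 = σsq θ := by
  haveI : FiniteDimensional ℝ (Submodule.span ℝ (Set.range vt)) :=
    FiniteDimensional.span_of_finite ℝ (Set.finite_range vt)
  set M : Matrix (Fin N) (Fin N) ℝ := K + η ^ 2 • 1 with hM
  -- part (i)
  have hinner : ∀ i j, ⟪vt i, vt j⟫ = M i j := by
    intro i j
    rw [hvt i, hvt j]
    simp only [WithLp.prod_inner_apply, WithLp.equiv_symm_apply, WithLp.ofLp_toLp,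
      real_inner_smul_left, real_inner_smul_right, EuclideanSpace.inner_single_right,
      EuclideanSpace.single_apply, hM, Matrix.add_apply, Matrix.smul_apply, Matrix.one_apply,
      smul_eq_mul, hK, hk]
    by_cases h : i = j <;> simp [h, eq_comm] <;> ring
  -- symmetry of M
  have hMsymm : ∀ i j, M i j = M j i := by
    intro i j
    rw [← hinner, ← hinner, real_inner_comm]
  -- positive definiteness of M
  have hquad : ∀ x : Fin N → ℝ, x ⬝ᵥ (K *ᵥ x) =
      ⟪∑ i, x i • φ (θi i), ∑ j, x j • φ (θi j)⟫ := by
    intro x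
    simp only [dotProduct, mulVec, dotProduct, sum_inner, inner_sum,
      real_inner_smul_left, real_inner_smul_right, hK, hk]
    refine Finset.sum_congr rfl fun i _ => ?_
    rw [Finset.mul_sum]
    refine Finset.sum_congr rfl fun j _ => ?_
    rw [real_inner_comm (φ (θi i))]
    ring
  have hMpos : M.PosDef := by
    rw [Matrix.posDef_iff_dotProduct_mulVec]
    constructor
    · rw [Matrix.IsHermitian]
      ext i j
      simp only [Matrix.conjTranspose_apply, star_trivial]
      exact hMsymm j i
    · intro x hx
      simp only [star_trivial, hM, add_mulVec, dotProduct_add, smul_mulVec,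
        one_mulVec, dotProduct_smul, smul_eq_mul]
      have h1 : 0 ≤ x ⬝ᵥ (K *ᵥ x) := by
        rw [hquad]; exact real_inner_self_nonneg
      have h2 : 0 < x ⬝ᵥ x := by
        refine lt_of_le_of_ne (Finset.sum_nonneg fun i _ => mul_self_nonneg _) ?_
        intro h
        exact hx (dotProduct_self_eq_zero.mp h.symm)
      have := mul_pos (pow_pos hη 2) h2
      linarith
  have hMunit : IsUnit M.det := hMpos.isUnit.map (Matrix.detMonoidHom)
  have hMinv : M * M⁻¹ = 1 := Matrix.mul_nonsing_inv M hMunit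
  refine ⟨hinner, ?_⟩
  intro θ
  set S := Submodule.span ℝ (Set.range vt) with hS
  set c : Fin N → ℝ := M⁻¹ *ᵥ kstar θ with hc
  set w : WithLp 2 (E × EuclideanSpace ℝ (Fin N)) :=
    (WithLp.equiv 2 (E × EuclideanSpace ℝ (Fin N))).symm (φ θ, 0) with hw
  set p : WithLp 2 (E × EuclideanSpace ℝ (Fin N)) := ∑ i, c i • vt i with hp
  have hpmem : p ∈ S := Submodule.sum_mem _ fun i _ =>
    Submodule.smul_mem _ _ (Submodule.subset_span (Set.mem_range_self i))
  have hwinner : ∀ j, ⟪w, vt j⟫ = kstar θ j := by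
    intro j
    rw [hw, hvt j]
    simp [WithLp.prod_inner_apply, hkstar, hk]
  have hpinner : ∀ j, ⟪p, vt j⟫ = kstar θ j := by
    intro j
    rw [hp]
    rw [sum_inner]
    have : ∀ i, ⟪c i • vt i, vt j⟫ = M j i * c i := by
      intro i
      rw [real_inner_smul_left, hinner, hMsymm]
      ring
    rw [Finset.sum_congr rfl fun i _ => this i]
    have : ∑ i, M j i * c i = (M *ᵥ c) j := rfl
    rw [this, hc, Matrix.mulVec_mulVec, hMinv, Matrix.one_mulVec]
  have horthgen : ∀ i, vt i ∈ (ℝ ∙ (w - p))ᗮ := by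
    intro i
    rw [Submodule.mem_orthogonal_singleton_iff_inner_right, inner_sub_left,
      hwinner, hpinner, sub_self]
  have horth : ∀ u ∈ S, ⟪w - p, u⟫ = 0 := by
    intro u hu
    have hle : S ≤ (ℝ ∙ (w - p))ᗮ := by
      rw [hS, Submodule.span_le]
      rintro _ ⟨i, rfl⟩
      exact horthgen i
    exact Submodule.mem_orthogonal_singleton_iff_inner_right.mp (hle hu)
  have hproj : (Submodule.orthogonalProjectionOnto S w : WithLp 2 (E × EuclideanSpace ℝ (Fin N))) = p :=
    (Submodule.coe_orthogonalProjectionOnto_apply S w).trans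
      (Submodule.eq_starProjection_of_mem_of_inner_eq_zero hpmem horth)
  rw [hproj]
  have h1 : ‖w - p‖ ^ 2 = ⟪w - p, w - p⟫ := (real_inner_self_eq_norm_sq _).symm
  have h2 : ⟪w - p, p⟫ = 0 := horth p hpmem
  have h3 : ⟪w, w⟫ = k θ θ := by
    rw [hw]
    simp [WithLp.prod_inner_apply, hk]
  have h4 : ⟪w, p⟫ = kstar θ ⬝ᵥ c := by
    rw [hp, inner_sum]
    rw [dotProduct]
    refine Finset.sum_congr rfl fun i _ => ?_
    rw [real_inner_smul_right, hwinner]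
    ring
  have h5 : ⟪p, w⟫ = kstar θ ⬝ᵥ c := by rw [real_inner_comm]; exact h4
  rw [h1, inner_sub_right, h2, inner_sub_left, h3, h5, hσ θ, sub_zero, hc]
end

section
/- Under the GP posterior setup, suppose Y_i = ⟪φ(θ_i), w⟫ + ε_i for some w ∈ E and noise vector ε ∈ ℝ^N. In the augmented Hilbert space E × ℝ^N with inner product ⟪(a, x), (b, y)⟫ = ⟪a, b⟫_E + xᵀy, set ṽ_i = (φ(θ_i), η e_i) and w̃ = (w, η⁻¹ ε). Then Y_i = ⟪ṽ_i, w̃⟫ for all i, ‖w̃‖² = ‖w‖² + η⁻² Σ_{i=1}^N ε_i², and the GP posterior mean is the evaluation of w̃ against the projected test feature: μ(θ) = ⟪P (φ(θ), 0), w̃⟫ for every θ ∈ Θ, where P is the orthogonal projection onto span{ṽ₁, …, ṽ_N}. -/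
set_option synthInstance.maxHeartbeats 800000
set_option maxHeartbeats 1000000

open Matrix RealInnerProductSpace

/-- With `Y_i = ⟪φ(θ_i), w⟫ + ε_i`, in the augmented Hilbert space
`E × ℝ^N` with `ṽ_i = (φ(θ_i), η e_i)` and `w̃ = (w, η⁻¹ ε)`:
`Y_i = ⟪ṽ_i, w̃⟫` for all `i`, `‖w̃‖² = ‖w‖² + η⁻² Σ ε_i²`, and the GP posterior
mean satisfies `μ(θ) = ⟪P (φ(θ), 0), w̃⟫` for every `θ`, where `P` is the
orthogonal projection onto `span{ṽ₁, …, ṽ_N}`. -/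
theorem gp_augmented_observation_and_mean
    {Θ : Type*} [Nonempty Θ] {E : Type*}
    [NormedAddCommGroup E] [InnerProductSpace ℝ E] [CompleteSpace E]
    (φ : Θ → E) (k : Θ → Θ → ℝ)
    (hk : ∀ θ θ' : Θ, k θ θ' = ⟪φ θ, φ θ'⟫)
    {N : ℕ} (θi : Fin N → Θ)
    (K : Matrix (Fin N) (Fin N) ℝ)
    (hK : ∀ i j, K i j = k (θi i) (θi j))
    (kstar : Θ → Fin N → ℝ)
    (hkstar : ∀ θ i, kstar θ i = k θ (θi i))
    (η : ℝ) (hη : 0 < η)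
    (Y : Fin N → ℝ) (w : E) (ε : Fin N → ℝ)
    (hY : ∀ i, Y i = ⟪φ (θi i), w⟫ + ε i)
    (μ : Θ → ℝ)
    (hμ : ∀ θ, μ θ = kstar θ ⬝ᵥ ((K + η ^ 2 • 1)⁻¹ *ᵥ Y))
    (vt : Fin N → WithLp 2 (E × EuclideanSpace ℝ (Fin N)))
    (hvt : ∀ i, vt i = (WithLp.equiv 2 (E × EuclideanSpace ℝ (Fin N))).symm
      (φ (θi i), η • EuclideanSpace.single i (1 : ℝ)))
    (wt : WithLp 2 (E × EuclideanSpace ℝ (Fin N)))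
    (hwt : wt = (WithLp.equiv 2 (E × EuclideanSpace ℝ (Fin N))).symm
      (w, η⁻¹ • (WithLp.toLp 2 ε : EuclideanSpace ℝ (Fin N)))) :
    (∀ i, Y i = ⟪vt i, wt⟫) ∧
      ‖wt‖ ^ 2 = ‖w‖ ^ 2 + η⁻¹ ^ 2 * ∑ i, ε i ^ 2 ∧
      haveI : FiniteDimensional ℝ (Submodule.span ℝ (Set.range vt)) :=
        FiniteDimensional.span_of_finite ℝ (Set.finite_range vt)
      ∀ θ : Θ,
        μ θ = ⟪(Submodule.orthogonalProjection (Submodule.span ℝ (Set.range vt))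
            ((WithLp.equiv 2 (E × EuclideanSpace ℝ (Fin N))).symm (φ θ, 0)) :
            WithLp 2 (E × EuclideanSpace ℝ (Fin N))), wt⟫ := by
  have hη0 : η ≠ 0 := hη.ne'
  set G : Matrix (Fin N) (Fin N) ℝ := K + η ^ 2 • 1 with hGdef
  -- Part 1
  have part1 : ∀ i, Y i = ⟪vt i, wt⟫ := by
    intro i
    rw [hvt, hwt, WithLp.prod_inner_apply]
    simp only [WithLp.equiv_symm_apply, WithLp.ofLp_toLp, real_inner_smul_left,
      real_inner_smul_right, EuclideanSpace.inner_single_left, RCLike.inner_apply, hY i,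
      starRingEnd_apply, star_one, one_mul, Pi.smul_apply, smul_eq_mul, star_trivial]
    rw [inv_mul_cancel_left₀ hη0]
  -- Part 2
  have part2 : ‖wt‖ ^ 2 = ‖w‖ ^ 2 + η⁻¹ ^ 2 * ∑ i, ε i ^ 2 := by
    have h1 : (⟪wt, wt⟫ : ℝ) = ‖wt‖ ^ 2 := real_inner_self_eq_norm_sq wt
    rw [← h1, hwt, WithLp.prod_inner_apply]
    simp only [WithLp.equiv_symm_apply, WithLp.ofLp_toLp]
    have h2 : @inner ℝ (EuclideanSpace ℝ (Fin N)) _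
          (η⁻¹ • (WithLp.toLp 2 ε : EuclideanSpace ℝ (Fin N))) (η⁻¹ • (WithLp.toLp 2 ε : EuclideanSpace ℝ (Fin N)))
        = η⁻¹ ^ 2 * ∑ i, ε i ^ 2 := by
      rw [PiLp.inner_apply, Finset.mul_sum]
      refine Finset.sum_congr rfl fun i _ => ?_
      simp only [RCLike.inner_apply, starRingEnd_apply, star_trivial, PiLp.smul_apply,
        smul_eq_mul]
      ring
    rw [real_inner_self_eq_norm_sq, h2]
  refine ⟨part1, part2, ?_⟩
  -- Gram identity
  have hvij : ∀ i j, ⟪vt i, vt j⟫ = G i j := by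
    intro i j
    rw [hvt, hvt, WithLp.prod_inner_apply]
    simp only [WithLp.equiv_symm_apply, WithLp.ofLp_toLp, real_inner_smul_left,
      real_inner_smul_right, EuclideanSpace.inner_single_left, RCLike.inner_apply,
      EuclideanSpace.single_apply, starRingEnd_apply, star_one, one_mul, star_trivial]
    rw [hGdef]
    simp only [Matrix.add_apply, Matrix.smul_apply, Matrix.one_apply, hK, hk, smul_eq_mul]
    by_cases h : i = j <;> simp [h, eq_comm] <;> ring
  have hKsymm : ∀ i j, K j i = K i j := by
    intro i j
    rw [hK, hK, hk, hk]
    exact real_inner_comm _ _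
  have hGsymm' : ∀ i j, G i j = G j i := by
    intro i j
    rw [← hvij i j, ← hvij j i]
    exact real_inner_comm _ _
  have hGsymm : Gᵀ = G := by
    ext i j
    rw [Matrix.transpose_apply]
    exact hGsymm' j i
  -- positive definiteness of G
  have key : ∀ x : Fin N → ℝ, x ⬝ᵥ (K *ᵥ x) = ‖∑ i, x i • φ (θi i)‖ ^ 2 := by
    intro x
    rw [← real_inner_self_eq_norm_sq, sum_inner]
    simp_rw [inner_sum, real_inner_smul_left, real_inner_smul_right]
    simp only [dotProduct, Matrix.mulVec, hK, hk, Finset.mul_sum]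
    exact Finset.sum_congr rfl fun j _ => Finset.sum_congr rfl fun i _ => by ring
  have hGpd : G.PosDef := by
    refine Matrix.PosDef.of_dotProduct_mulVec_pos ?_ ?_
    · show Gᴴ = G
      ext i j
      rw [Matrix.conjTranspose_apply, star_trivial]
      exact hGsymm' j i
    · intro x hx
      have hsx : star x = x := by simp
      rw [hsx, hGdef, Matrix.add_mulVec, dotProduct_add, Matrix.smul_mulVec,
        Matrix.one_mulVec, dotProduct_smul, key, smul_eq_mul]
      have h0 : (0 : ℝ) ≤ x ⬝ᵥ x := by
        rw [dotProduct]
        exact Finset.sum_nonneg fun i _ => mul_self_nonneg _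
      have h1 : (0 : ℝ) < x ⬝ᵥ x :=
        lt_of_le_of_ne h0 fun h => hx (dotProduct_self_eq_zero.mp h.symm)
      have h2 : (0 : ℝ) < η ^ 2 * (x ⬝ᵥ x) := mul_pos (pow_pos hη 2) h1
      have h3 : (0 : ℝ) ≤ ‖∑ i, x i • φ (θi i)‖ ^ 2 := sq_nonneg _
      linarith
  have hGdet : IsUnit G.det := hGpd.det_pos.ne'.isUnit
  have hGinv : G * G⁻¹ = 1 := Matrix.mul_nonsing_inv G hGdet
  have hGinvT : G⁻¹ᵀ = G⁻¹ := by
    rw [Matrix.transpose_nonsing_inv, hGsymm]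
  haveI : FiniteDimensional ℝ (Submodule.span ℝ (Set.range vt)) :=
    FiniteDimensional.span_of_finite ℝ (Set.finite_range vt)
  intro θ
  set S := Submodule.span ℝ (Set.range vt) with hS
  set u : WithLp 2 (E × EuclideanSpace ℝ (Fin N)) :=
    (WithLp.equiv 2 (E × EuclideanSpace ℝ (Fin N))).symm (φ θ, 0) with hu
  set c : Fin N → ℝ := G⁻¹ *ᵥ kstar θ with hc
  set v : WithLp 2 (E × EuclideanSpace ℝ (Fin N)) := ∑ i, c i • vt i with hv
  have hvmem : v ∈ S :=
    Submodule.sum_mem _ fun i _ => Submodule.smul_mem _ _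
      (Submodule.subset_span (Set.mem_range_self i))
  have hvtu : ∀ j, ⟪vt j, u⟫ = kstar θ j := by
    intro j
    rw [hvt, hu, WithLp.prod_inner_apply]
    simp [hkstar, hk, real_inner_comm]
  have hGc : G *ᵥ c = kstar θ := by
    rw [hc, Matrix.mulVec_mulVec, hGinv, Matrix.one_mulVec]
  have hortho : ∀ j, ⟪vt j, u - v⟫ = 0 := by
    intro j
    rw [inner_sub_right, hvtu, hv, inner_sum]
    have h4 : ∑ i, ⟪vt j, c i • vt i⟫ = (G *ᵥ c) j := by
      rw [Matrix.mulVec, dotProduct]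
      refine Finset.sum_congr rfl fun i _ => ?_
      rw [real_inner_smul_right, hvij]; ring
    rw [h4, hGc, sub_self]
  have hproj : (Submodule.orthogonalProjection S u : WithLp 2 (E × EuclideanSpace ℝ (Fin N))) = v := by
    rw [← Submodule.starProjection_apply]
    apply Submodule.eq_starProjection_of_mem_of_inner_eq_zero hvmem
    intro x hx
    rw [real_inner_comm]
    induction hx using Submodule.span_induction with
    | mem y hy => obtain ⟨j, rfl⟩ := hy; exact hortho j
    | zero => simp
    | add y z _ _ hy hz => rw [inner_add_left, hy, hz, add_zero]
    | smul a y _ hy => rw [real_inner_smul_left, hy, mul_zero]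
  rw [hproj, hv, sum_inner, hμ]
  have h5 : ∀ i, ⟪c i • vt i, wt⟫ = c i * Y i := by
    intro i; rw [real_inner_smul_left, ← part1 i]
  simp_rw [h5]
  rw [show kstar θ ⬝ᵥ (G⁻¹ *ᵥ Y) = c ⬝ᵥ Y by
    rw [hc, Matrix.dotProduct_mulVec, ← Matrix.mulVec_transpose, hGinvT], dotProduct]
end

section
/- (Deterministic confidence bound; key inequality in the proof of Theorem 1.) Under the GP posterior setup, suppose Y_i = ⟪φ(θ_i), w⟫ + ε_i for some w ∈ E with ‖w‖ ≤ B and noise satisfying |ε_i| ≤ η for i = 1, …, N, and set β = √(B² + N − Yᵀ (K + η² I_N)⁻¹ Y). Then for every θ ∈ Θ, |μ(θ) − ⟪φ(θ), w⟫| ≤ β · σ(θ), where σ(θ) = √(σ²(θ)). -/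
open Matrix RealInnerProductSpace

set_option maxHeartbeats 1000000 in
/-- deterministic confidence bound, key inequality in Theorem 1:
Under the GP posterior setup, if `Y_i = ⟪φ(θ_i), w⟫ + ε_i` with `‖w‖ ≤ B` and
`|ε_i| ≤ η`, and `β = √(B² + N − Yᵀ (K + η² I_N)⁻¹ Y)`, then for every `θ`,
`|μ(θ) − ⟪φ(θ), w⟫| ≤ β · σ(θ)`, where `σ(θ) = √(σ²(θ))`. -/
theorem gp_confidence_bound
    {Θ : Type*} [Nonempty Θ] {E : Type*}
    [NormedAddCommGroup E] [InnerProductSpace ℝ E] [CompleteSpace E]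
    (φ : Θ → E) (k : Θ → Θ → ℝ)
    (hk : ∀ θ θ' : Θ, k θ θ' = ⟪φ θ, φ θ'⟫)
    {N : ℕ} (θi : Fin N → Θ)
    (K : Matrix (Fin N) (Fin N) ℝ)
    (hK : ∀ i j, K i j = k (θi i) (θi j))
    (kstar : Θ → Fin N → ℝ)
    (hkstar : ∀ θ i, kstar θ i = k θ (θi i))
    (η : ℝ) (hη : 0 < η)
    (Y : Fin N → ℝ) (w : E) (B : ℝ) (hw : ‖w‖ ≤ B)
    (ε : Fin N → ℝ) (hε : ∀ i, |ε i| ≤ η)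
    (hY : ∀ i, Y i = ⟪φ (θi i), w⟫ + ε i)
    (μ : Θ → ℝ)
    (hμ : ∀ θ, μ θ = kstar θ ⬝ᵥ ((K + η ^ 2 • 1)⁻¹ *ᵥ Y))
    (σsq : Θ → ℝ)
    (hσ : ∀ θ, σsq θ = k θ θ - kstar θ ⬝ᵥ ((K + η ^ 2 • 1)⁻¹ *ᵥ kstar θ))
    (β : ℝ)
    (hβ : β = Real.sqrt (B ^ 2 + N - Y ⬝ᵥ ((K + η ^ 2 • 1)⁻¹ *ᵥ Y))) :
    ∀ θ : Θ, |μ θ - ⟪φ θ, w⟫| ≤ β * Real.sqrt (σsq θ) := by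
  intro θ
  have hη2 : (0:ℝ) < η ^ 2 := by positivity
  set A : Matrix (Fin N) (Fin N) ℝ := K + η ^ 2 • 1 with hAdef
  -- quadratic form of K
  have hips : ∀ (x : Fin N → ℝ) (y : E),
      ⟪∑ i, x i • φ (θi i), y⟫ = ∑ i, x i * ⟪φ (θi i), y⟫ := by
    intro x y
    rw [sum_inner]
    exact Finset.sum_congr rfl fun i _ => real_inner_smul_left _ _ _
  have hiK : ∀ (x : Fin N → ℝ) (i : Fin N),
      ⟪φ (θi i), ∑ j, x j • φ (θi j)⟫ = (K *ᵥ x) i := by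
    intro x i
    rw [inner_sum]
    simp only [real_inner_smul_right, mulVec, dotProduct, hK, hk]
    exact Finset.sum_congr rfl fun j _ => mul_comm _ _
  have hKq : ∀ x : Fin N → ℝ, x ⬝ᵥ (K *ᵥ x) =
      ⟪∑ i, x i • φ (θi i), ∑ j, x j • φ (θi j)⟫ := by
    intro x
    rw [hips, dotProduct]
    exact Finset.sum_congr rfl fun i _ => by rw [hiK]
  have hApos : A.PosDef := by
    rw [Matrix.posDef_iff_dotProduct_mulVec]
    constructor
    · ext i j
      simp only [hAdef, conjTranspose_apply, Matrix.add_apply, Matrix.smul_apply, one_apply, star_trivial,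
        transpose_apply]
      rw [hK, hK, hk, hk, real_inner_comm]
      by_cases h : i = j <;> simp [h, eq_comm]
    · intro x hx
      have hx2 : 0 < x ⬝ᵥ x := by
        rcases Function.ne_iff.1 hx with ⟨i, hi⟩
        simp only [dotProduct]
        exact Finset.sum_pos' (fun j _ => mul_self_nonneg (x j))
          ⟨i, Finset.mem_univ i, mul_self_pos.2 hi⟩
      have hxK : 0 ≤ x ⬝ᵥ (K *ᵥ x) := by
        rw [hKq]; exact real_inner_self_nonneg
      have : star x = x := by ext i; simp
      rw [this, hAdef, add_mulVec, smul_mulVec, one_mulVec, dotProduct_add,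
        dotProduct_smul]
      have : 0 < η ^ 2 * (x ⬝ᵥ x) := mul_pos hη2 hx2
      simpa [smul_eq_mul] using add_pos_of_nonneg_of_pos hxK this
  have hAinv : ∀ z : Fin N → ℝ, A *ᵥ (A⁻¹ *ᵥ z) = z := by
    intro z
    rw [mulVec_mulVec, Matrix.mul_nonsing_inv _ (isUnit_iff_ne_zero.2 hApos.det_pos.ne'),
      one_mulVec]
  set c : Fin N → ℝ := A⁻¹ *ᵥ Y with hc
  set d : Fin N → ℝ := A⁻¹ *ᵥ kstar θ with hd
  have hAc : ∀ i, (K *ᵥ c) i = Y i - η ^ 2 * c i := by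
    intro i
    have h := congrFun (hAinv Y) i
    rw [← hc, hAdef, add_mulVec, smul_mulVec, one_mulVec] at h
    simp only [Pi.add_apply, Pi.smul_apply, smul_eq_mul] at h
    linarith
  have hAd : ∀ i, (K *ᵥ d) i = kstar θ i - η ^ 2 * d i := by
    intro i
    have h := congrFun (hAinv (kstar θ)) i
    rw [← hd, hAdef, add_mulVec, smul_mulVec, one_mulVec] at h
    simp only [Pi.add_apply, Pi.smul_apply, smul_eq_mul] at h
    linarith
  set v : E := (∑ i, c i • φ (θi i)) - w with hv
  set u : E := (∑ i, ε i • φ (θi i)) - η ^ 2 • w with hu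
  set a : E := (η ^ 2)⁻¹ • (φ θ - ∑ i, d i • φ (θi i)) with ha
  have hiks : ∀ i, ⟪φ (θi i), φ θ⟫ = kstar θ i := fun i => by
    rw [hkstar, hk, real_inner_comm]
  have hiw : ∀ i, ⟪φ (θi i), w⟫ = Y i - ε i := fun i => by rw [hY i]; ring
  -- P a = φ θ
  have hPa : (η ^ 2 : ℝ) • a + ∑ i, ⟪φ (θi i), a⟫ • φ (θi i) = φ θ := by
    have h1 : ∀ i, ⟪φ (θi i), a⟫ = d i := by
      intro i
      rw [ha, real_inner_smul_right, inner_sub_right, hiks, hiK]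
      rw [hAd i]
      field_simp
      ring
    have h2 : (η ^ 2 : ℝ) • a = φ θ - ∑ i, d i • φ (θi i) := by
      rw [ha, smul_smul, mul_inv_cancel₀ hη2.ne', one_smul]
    simp only [h1, h2]
    abel
  -- P v = u
  have hPv : (η ^ 2 : ℝ) • v + ∑ i, ⟪φ (θi i), v⟫ • φ (θi i) = u := by
    have h1 : ∀ i, ⟪φ (θi i), v⟫ = ε i - η ^ 2 * c i := by
      intro i
      rw [hv, inner_sub_right, hiK, hiw, hAc i]
      ring
    simp only [h1, sub_smul, ← smul_smul, Finset.sum_sub_distrib, ← Finset.smul_sum]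
    rw [hv, hu, smul_sub]
    abel
  -- the Cauchy-Schwarz carrier
  set T : E → WithLp 2 (E × EuclideanSpace ℝ (Fin N)) := fun x =>
    (WithLp.equiv 2 (E × EuclideanSpace ℝ (Fin N))).symm
      (η • x, (WithLp.equiv 2 (Fin N → ℝ)).symm fun i => ⟪φ (θi i), x⟫) with hT
  have hTin : ∀ x y : E,
      ⟪T x, T y⟫ = ⟪(η ^ 2 : ℝ) • x + ∑ i, ⟪φ (θi i), x⟫ • φ (θi i), y⟫ := by
    intro x y
    simp only [hT]
    simp only [WithLp.prod_inner_apply, WithLp.equiv_symm_apply, WithLp.ofLp_toLp,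
      PiLp.inner_apply, PiLp.toLp_apply, RCLike.inner_apply, conj_trivial]
    rw [inner_add_left, sum_inner]
    simp only [real_inner_smul_left, real_inner_smul_right]
    rw [Finset.sum_congr rfl fun i _ => mul_comm ⟪φ (θi i), y⟫ ⟪φ (θi i), x⟫]
    ring
  have key1 : ⟪T a, T v⟫ = ⟪φ θ, v⟫ := by rw [hTin, hPa]
  have key2 : ⟪T a, T a⟫ = ⟪φ θ, a⟫ := by rw [hTin, hPa]
  have key3 : ⟪T v, T v⟫ = ⟪u, v⟫ := by rw [hTin, hPv]
  -- scalar identities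
  have hμv : ⟪φ θ, v⟫ = μ θ - ⟪φ θ, w⟫ := by
    rw [hv, inner_sub_right, hμ θ]
    congr 1
    rw [inner_sum, dotProduct]
    exact Finset.sum_congr rfl fun i _ => by
      rw [real_inner_smul_right, hkstar, hk]; ring
  have hσa : ⟪φ θ, a⟫ = (η ^ 2)⁻¹ * σsq θ := by
    rw [ha, real_inner_smul_right, inner_sub_right, hσ θ, ← hd]
    congr 1
    rw [hk]
    congr 1
    rw [inner_sum, dotProduct]
    exact Finset.sum_congr rfl fun i _ => by
      rw [real_inner_smul_right, hkstar, hk]; ring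
  have huv : ⟪u, v⟫ = (∑ i, ε i ^ 2) + η ^ 2 * ‖w‖ ^ 2 - η ^ 2 * (Y ⬝ᵥ c) := by
    have e1 : ⟪∑ i, ε i • φ (θi i), ∑ j, c j • φ (θi j)⟫
        = ∑ i, ε i * (Y i - η ^ 2 * c i) := by
      rw [hips]
      exact Finset.sum_congr rfl fun i _ => by rw [hiK, hAc i]
    have e2 : ⟪∑ i, ε i • φ (θi i), w⟫ = ∑ i, ε i * (Y i - ε i) := by
      rw [hips]
      exact Finset.sum_congr rfl fun i _ => by rw [hiw]
    have e3 : ⟪w, ∑ j, c j • φ (θi j)⟫ = ∑ i, c i * (Y i - ε i) := by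
      rw [inner_sum]
      exact Finset.sum_congr rfl fun i _ => by
        rw [real_inner_smul_right, real_inner_comm, hiw]
    have e4 : ⟪w, w⟫ = ‖w‖ ^ 2 := real_inner_self_eq_norm_sq w
    rw [hu, hv, inner_sub_left, inner_sub_right, inner_sub_right, e1, e2,
      real_inner_smul_left, real_inner_smul_left, e3, e4]
    have hsum : (∑ i, ε i * (Y i - η ^ 2 * c i)) - (∑ i, ε i * (Y i - ε i))
        - η ^ 2 * (∑ i, c i * (Y i - ε i))
        = (∑ i, ε i ^ 2) - η ^ 2 * (Y ⬝ᵥ c) := by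
      simp only [dotProduct, Finset.mul_sum, ← Finset.sum_sub_distrib]
      exact Finset.sum_congr rfl fun i _ => by ring
    linarith [hsum]
  -- nonnegativity and bounds
  have huv0 : 0 ≤ ⟪u, v⟫ := by rw [← key3]; exact real_inner_self_nonneg
  have hσ0 : 0 ≤ σsq θ := by
    have h0 : 0 ≤ ⟪φ θ, a⟫ := by rw [← key2]; exact real_inner_self_nonneg
    rw [hσa] at h0
    calc (0:ℝ) ≤ η ^ 2 * ((η ^ 2)⁻¹ * σsq θ) := mul_nonneg hη2.le h0
      _ = σsq θ := by field_simp
  have hsum_eps : (∑ i, ε i ^ 2) ≤ N * η ^ 2 := by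
    calc (∑ i, ε i ^ 2) ≤ ∑ _i : Fin N, η ^ 2 :=
          Finset.sum_le_sum fun i _ =>
            sq_le_sq' (abs_le.1 (hε i)).1 (abs_le.1 (hε i)).2
      _ = N * η ^ 2 := by simp [Finset.sum_const, Finset.card_univ, nsmul_eq_mul]
  have hw2 : ‖w‖ ^ 2 ≤ B ^ 2 := by nlinarith [norm_nonneg w]
  have hub : ⟪u, v⟫ ≤ η ^ 2 * (B ^ 2 + N - Y ⬝ᵥ c) := by
    rw [huv]
    nlinarith [mul_le_mul_of_nonneg_left hw2 hη2.le]
  have hS0 : 0 ≤ B ^ 2 + (N : ℝ) - Y ⬝ᵥ c := by nlinarith [huv0, hub]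
  -- main quadratic inequality
  have hmain : (μ θ - ⟪φ θ, w⟫) ^ 2 ≤ (B ^ 2 + (N : ℝ) - Y ⬝ᵥ c) * σsq θ := by
    have hcs := real_inner_mul_inner_self_le (T a) (T v)
    rw [key1, key2, key3, hμv, hσa] at hcs
    have step : ((η ^ 2)⁻¹ * σsq θ) * ⟪u, v⟫
        ≤ ((η ^ 2)⁻¹ * σsq θ) * (η ^ 2 * (B ^ 2 + N - Y ⬝ᵥ c)) :=
      mul_le_mul_of_nonneg_left hub (mul_nonneg (by positivity) hσ0)
    have eqn : ((η ^ 2)⁻¹ * σsq θ) * (η ^ 2 * (B ^ 2 + N - Y ⬝ᵥ c))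
        = (B ^ 2 + (N : ℝ) - Y ⬝ᵥ c) * σsq θ := by
      field_simp
    nlinarith [hcs, step, eqn]
  rw [hβ]
  calc |μ θ - ⟪φ θ, w⟫| = Real.sqrt ((μ θ - ⟪φ θ, w⟫) ^ 2) :=
        (Real.sqrt_sq_eq_abs _).symm
    _ ≤ Real.sqrt ((B ^ 2 + (N : ℝ) - Y ⬝ᵥ c) * σsq θ) := Real.sqrt_le_sqrt hmain
    _ = Real.sqrt (B ^ 2 + (N : ℝ) - Y ⬝ᵥ c) * Real.sqrt (σsq θ) := Real.sqrt_mul hS0 _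
end

section
/- (Theorem 1, part 1, concrete form for a fixed dataset.) Let Θ be a nonempty set, and for each of two functions let the GP posterior setup hold: real Hilbert spaces E_g, E_s, feature maps φ_g : Θ → E_g and φ_s : Θ → E_s with kernels k_g, k_s, vectors w_g ∈ E_g and w_s ∈ E_s with ‖w_g‖ ≤ B_g, ‖w_s‖ ≤ B_s, defining g(θ) = ⟪φ_g(θ), w_g⟫ and s(θ) = ⟪φ_s(θ), w_s⟫. Fix training inputs θ₁, …, θ_N and observations Y^g_i = g(θ_i) + ε^g_i, Y^s_i = s(θ_i) + ε^s_i with |ε^g_i| ≤ η_g and |ε^s_i| ≤ η_s for noise levels η_g, η_s > 0. Let μ_g, σ_g (resp. μ_s, σ_s) be the GP posterior mean and standard deviation built from (φ_g, η_g, Y^g) (resp. (φ_s, η_s, Y^s)), and set β_g = √(B_g² + N − (Y^g)ᵀ (K_g + η_g² I_N)⁻¹ Y^g) and β_s = √(B_s² + N − (Y^s)ᵀ (K_s + η_s² I_N)⁻¹ Y^s), where K_g, K_s are the Gram matrices of the training inputs under k_g, k_s. Then every θ ∈ Θ with μ_g(θ) − β_g σ_g(θ) > 0 and μ_s(θ)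 − β_s σ_s(θ) > 0 satisfies g(θ) > 0 and s(θ) > 0. -/
open Matrix RealInnerProductSpace


set_option maxHeartbeats 1000000 in
lemma gp_abs_bound {E : Type*} [NormedAddCommGroup E] [InnerProductSpace ℝ E]
    {N : ℕ} (ψ : Fin N → E) (x w : E) (B η : ℝ) (hw : ‖w‖ ≤ B) (hη : 0 < η)
    (Y ε : Fin N → ℝ) (hε : ∀ i, |ε i| ≤ η) (hY : ∀ i, Y i = ⟪ψ i, w⟫ + ε i)
    (K : Matrix (Fin N) (Fin N) ℝ) (hK : ∀ i j, K i j = ⟪ψ i, ψ j⟫) :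
    |⟪x, w⟫ - (fun i => ⟪x, ψ i⟫) ⬝ᵥ ((K + η ^ 2 • 1)⁻¹ *ᵥ Y)| ≤
      Real.sqrt (B ^ 2 + N - Y ⬝ᵥ ((K + η ^ 2 • 1)⁻¹ *ᵥ Y)) *
      Real.sqrt (⟪x, x⟫ - (fun i => ⟪x, ψ i⟫) ⬝ᵥ ((K + η ^ 2 • 1)⁻¹ *ᵥ fun i => ⟪x, ψ i⟫)) := by
  have hη2 : (0:ℝ) < η ^ 2 := by positivity
  set A := K + η ^ 2 • (1 : Matrix (Fin N) (Fin N) ℝ) with hAdef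
  set T : E → (Fin N → ℝ) := fun u i => ⟪ψ i, u⟫ with hTdef
  set Φ : (Fin N → ℝ) → E := fun c => ∑ i, c i • ψ i with hΦdef
  have hΦinner : ∀ c u, ⟪Φ c, u⟫ = c ⬝ᵥ T u := by
    intro c u
    simp [hΦdef, hTdef, sum_inner, real_inner_smul_left, dotProduct]
  have hTΦ : ∀ c, T (Φ c) = K *ᵥ c := by
    intro c; funext i
    simp [hTdef, hΦdef, inner_sum, real_inner_smul_right, mulVec, dotProduct, hK, mul_comm]
  have hAv : ∀ c, A *ᵥ c = K *ᵥ c + η ^ 2 • c := by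
    intro c; simp [hAdef, add_mulVec, smul_mulVec]
  have hquad : ∀ c, c ⬝ᵥ (A *ᵥ c) = ‖Φ c‖ ^ 2 + η ^ 2 * (c ⬝ᵥ c) := by
    intro c
    have h1 : c ⬝ᵥ (K *ᵥ c) = ⟪Φ c, Φ c⟫ := by rw [hΦinner, hTΦ]
    rw [hAv, dotProduct_add, h1, real_inner_self_eq_norm_sq, dotProduct_smul]
    simp [smul_eq_mul]
  have hKsymm : Kᵀ = K := by
    ext i j; simp [transpose_apply, hK, real_inner_comm]
  have hAsymm : Aᵀ = A := by
    simp [hAdef, transpose_add, transpose_smul, transpose_one, hKsymm]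
  have hdotself : ∀ c : Fin N → ℝ, 0 ≤ c ⬝ᵥ c := by
    intro c
    exact Finset.sum_nonneg fun i _ => mul_self_nonneg _
  have hApd : A.PosDef := by
    rw [posDef_iff_dotProduct_mulVec]
    constructor
    · show Aᴴ = A
      ext i j
      simp only [conjTranspose_apply, star_trivial]
      exact congrFun (congrFun hAsymm i) j
    · intro c hc
      obtain ⟨i, hi⟩ := Function.ne_iff.1 hc
      have hi' : c i ≠ 0 := by simpa using hi
      have hcc : 0 < c ⬝ᵥ c :=
        Finset.sum_pos' (fun j _ => mul_self_nonneg _)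
          ⟨i, Finset.mem_univ i, mul_self_pos.2 hi'⟩
      show (0:ℝ) < star c ⬝ᵥ (A *ᵥ c)
      rw [star_trivial, hquad]
      nlinarith [sq_nonneg ‖Φ c‖]
  have hdet : IsUnit A.det := isUnit_iff_ne_zero.2 (ne_of_gt hApd.det_pos)
  have hAAi : A * A⁻¹ = 1 := mul_nonsing_inv A hdet
  have hAiA : A⁻¹ * A = 1 := nonsing_inv_mul A hdet
  have hAisymm : A⁻¹ᵀ = A⁻¹ := by rw [transpose_nonsing_inv, hAsymm]
  have hdsymm : ∀ a b : Fin N → ℝ, a ⬝ᵥ (A⁻¹ *ᵥ b) = b ⬝ᵥ (A⁻¹ *ᵥ a) := by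
    intro a b
    rw [dotProduct_mulVec, ← vecMul_transpose, hAisymm, dotProduct_comm]
  set Q : E → E → ℝ := fun u u' => ⟪u, u'⟫ - T u ⬝ᵥ (A⁻¹ *ᵥ T u') with hQdef
  have hQdiag : ∀ u : E, 0 ≤ Q u u := by
    intro u
    set b := A⁻¹ *ᵥ T u with hb
    have hAb : A *ᵥ b = T u := by rw [hb, mulVec_mulVec, hAAi, one_mulVec]
    have h1 : T u ⬝ᵥ b = b ⬝ᵥ (A *ᵥ b) := by rw [← hAb]; exact dotProduct_comm _ _
    have h2 : b ⬝ᵥ T u = ⟪Φ b, u⟫ := (hΦinner b u).symm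
    have h3 : b ⬝ᵥ (A *ᵥ b) = ‖Φ b‖ ^ 2 + η ^ 2 * (b ⬝ᵥ b) := hquad b
    have h4 : ⟪Φ b, u⟫ ≤ ‖Φ b‖ * ‖u‖ := real_inner_le_norm _ _
    have h5 : 0 ≤ b ⬝ᵥ b := hdotself b
    have hq0 : 0 ≤ T u ⬝ᵥ b := by rw [h1, h3]; positivity
    have hqB : ‖Φ b‖ ^ 2 ≤ T u ⬝ᵥ b := by rw [h1, h3]; nlinarith
    have hqu : T u ⬝ᵥ b ≤ ‖Φ b‖ * ‖u‖ := by
      rw [dotProduct_comm, h2]; exact h4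
    have key : T u ⬝ᵥ b ≤ ‖u‖ ^ 2 := by
      nlinarith [norm_nonneg (Φ b), norm_nonneg u, sq_nonneg (‖Φ b‖ - ‖u‖)]
    have : T u ⬝ᵥ (A⁻¹ *ᵥ T u) ≤ ‖u‖ ^ 2 := by rw [← hb]; exact key
    simp only [hQdef, real_inner_self_eq_norm_sq]
    linarith
  have hTadd : ∀ u v : E, T (u + v) = T u + T v := by
    intro u v; funext i; simp [hTdef, inner_add_right]
  have hTsmul : ∀ (r : ℝ) (u : E), T (r • u) = r • T u := by
    intro r u; funext i; simp [hTdef, real_inner_smul_right]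
  have hQadd1 : ∀ u u' v : E, Q (u + u') v = Q u v + Q u' v := by
    intro u u' v
    show ⟪u + u', v⟫ - T (u + u') ⬝ᵥ (A⁻¹ *ᵥ T v) = _
    rw [hTadd, inner_add_left, add_dotProduct]
    show _ = (⟪u, v⟫ - T u ⬝ᵥ (A⁻¹ *ᵥ T v)) + (⟪u', v⟫ - T u' ⬝ᵥ (A⁻¹ *ᵥ T v))
    ring
  have hQsmul1 : ∀ (t : ℝ) (u v : E), Q (t • u) v = t * Q u v := by
    intro t u v
    show ⟪t • u, v⟫ - T (t • u) ⬝ᵥ (A⁻¹ *ᵥ T v) = t * (⟪u, v⟫ - T u ⬝ᵥ (A⁻¹ *ᵥ T v))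
    rw [hTsmul, real_inner_smul_left, smul_dotProduct, smul_eq_mul]
    ring
  have hQsymm : ∀ u v : E, Q u v = Q v u := by
    intro u v
    show ⟪u, v⟫ - T u ⬝ᵥ (A⁻¹ *ᵥ T v) = ⟪v, u⟫ - T v ⬝ᵥ (A⁻¹ *ᵥ T u)
    rw [real_inner_comm, hdsymm]
  have hexp : ∀ (u v : E) (t : ℝ),
      Q (u + t • v) (u + t • v) = Q u u + 2 * t * Q u v + t ^ 2 * Q v v := by
    intro u v t
    have h1 : Q u (u + t • v) = Q u u + t * Q u v := by
      rw [hQsymm u (u + t • v), hQadd1 u (t • v) u, hQsmul1 t v u, hQsymm v u, hQsymm u u]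
    have h2 : Q (t • v) (u + t • v) = t * (Q u v + t * Q v v) := by
      rw [hQsmul1 t v (u + t • v), hQsymm v (u + t • v), hQadd1 u (t • v) v,
        hQsmul1 t v v]
    rw [hQadd1 u (t • v) (u + t • v), h1, h2]
    ring
  have hCS : ∀ u v : E, (Q u v) ^ 2 ≤ Q u u * Q v v := by
    intro u v
    have h := discrim_le_zero (a := Q v v) (b := 2 * Q u v) (c := Q u u) (fun t => by
      have := hQdiag (u + t • v)
      rw [hexp u v t] at this
      linarith)
    rw [discrim] at h
    nlinarith
  -- the specific vectors
  set c : ℝ := (η ^ 2)⁻¹ with hc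
  have hcη : c * η ^ 2 = 1 := inv_mul_cancel₀ (ne_of_gt hη2)
  set z : Fin N → ℝ := T w with hz
  have hYz : Y = z + ε := by funext i; simp [hz, hTdef, hY i]
  set v : E := w - c • Φ ε with hv
  have hTv : T v = Y - c • (A *ᵥ ε) := by
    funext i
    have h1 : ⟪ψ i, Φ ε⟫ = (K *ᵥ ε) i := congrFun (hTΦ ε) i
    have h2 : (A *ᵥ ε) i = (K *ᵥ ε) i + η ^ 2 * ε i := by
      rw [hAv]; simp [smul_eq_mul]
    have h3 : T v i = ⟪ψ i, w⟫ - c * (K *ᵥ ε) i := by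
      simp only [hTdef, hv, inner_sub_right, real_inner_smul_right, h1]
    have h5 : (Y - c • (A *ᵥ ε)) i = Y i - c * ((K *ᵥ ε) i + η ^ 2 * ε i) := by
      simp [h2]
    rw [h3, h5, hY i]
    linear_combination (ε i) * hcη
  have hAiTv : A⁻¹ *ᵥ T v = A⁻¹ *ᵥ Y - c • ε := by
    rw [hTv, mulVec_sub, mulVec_smul, mulVec_mulVec, hAiA, one_mulVec]
  have hTx_eq : (fun i => ⟪x, ψ i⟫) = T x := by
    funext i; simp [hTdef, real_inner_comm]
  have hQxv : Q x v = ⟪x, w⟫ - T x ⬝ᵥ (A⁻¹ *ᵥ Y) := by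
    have h1 : ⟪x, v⟫ = ⟪x, w⟫ - c * (ε ⬝ᵥ T x) := by
      rw [hv, inner_sub_right, real_inner_smul_right, real_inner_comm (Φ ε) x, hΦinner]
    have h2 : T x ⬝ᵥ (A⁻¹ *ᵥ T v) = T x ⬝ᵥ (A⁻¹ *ᵥ Y) - c * (T x ⬝ᵥ ε) := by
      rw [hAiTv, dotProduct_sub, dotProduct_smul, smul_eq_mul]
    show ⟪x, v⟫ - T x ⬝ᵥ (A⁻¹ *ᵥ T v) = _
    rw [h1, h2, dotProduct_comm ε (T x)]
    ring
  have hQvv : Q v v = ⟪w, w⟫ + c * (ε ⬝ᵥ ε) - Y ⬝ᵥ (A⁻¹ *ᵥ Y) := by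
    have hwΦ : ⟪w, Φ ε⟫ = ε ⬝ᵥ z := by
      rw [real_inner_comm, hΦinner]
    have hΦΦ : ⟪Φ ε, Φ ε⟫ = ε ⬝ᵥ (A *ᵥ ε) - η ^ 2 * (ε ⬝ᵥ ε) := by
      rw [hΦinner, hTΦ, hAv, dotProduct_add, dotProduct_smul, smul_eq_mul]; ring
    have h1 : ⟪v, v⟫ = ⟪w, w⟫ - 2 * (c * (ε ⬝ᵥ z)) + c ^ 2 * (ε ⬝ᵥ (A *ᵥ ε) - η ^ 2 * (ε ⬝ᵥ ε)) := by
      rw [hv, real_inner_sub_sub_self, real_inner_smul_right, real_inner_smul_left,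
        real_inner_smul_right, hwΦ, hΦΦ]
      ring
    have hcross : (A *ᵥ ε) ⬝ᵥ (A⁻¹ *ᵥ Y) = Y ⬝ᵥ ε := by
      rw [hdsymm, mulVec_mulVec, hAiA, one_mulVec]
    have hAee : (A *ᵥ ε) ⬝ᵥ ε = ε ⬝ᵥ (A *ᵥ ε) := dotProduct_comm _ _
    have h2 : T v ⬝ᵥ (A⁻¹ *ᵥ T v) =
        Y ⬝ᵥ (A⁻¹ *ᵥ Y) - c * (Y ⬝ᵥ ε) - c * (Y ⬝ᵥ ε) + c ^ 2 * (ε ⬝ᵥ (A *ᵥ ε)) := by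
      rw [hAiTv, hTv]
      simp only [sub_dotProduct, dotProduct_sub, smul_dotProduct, dotProduct_smul,
        smul_eq_mul, hcross, hAee]
      ring
    have hYe : Y ⬝ᵥ ε = ε ⬝ᵥ z + ε ⬝ᵥ ε := by
      rw [hYz, add_dotProduct, dotProduct_comm z ε]
    show ⟪v, v⟫ - T v ⬝ᵥ (A⁻¹ *ᵥ T v) = _
    rw [h1, h2, hYe]
    have hcc2 : c ^ 2 * η ^ 2 = c := by rw [sq, mul_assoc, hcη, mul_one]
    linear_combination (-(ε ⬝ᵥ ε)) * hcc2
  have hee : ε ⬝ᵥ ε ≤ N * η ^ 2 := by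
    have : ∀ i, ε i * ε i ≤ η ^ 2 := by
      intro i
      have := hε i
      nlinarith [abs_nonneg (ε i), sq_abs (ε i), neg_abs_le (ε i), le_abs_self (ε i)]
    calc ε ⬝ᵥ ε = ∑ i, ε i * ε i := rfl
      _ ≤ ∑ _i : Fin N, η ^ 2 := Finset.sum_le_sum fun i _ => this i
      _ = N * η ^ 2 := by simp [Finset.sum_const, nsmul_eq_mul]
  have hB0 : 0 ≤ B := le_trans (norm_nonneg w) hw
  have hQvv_le : Q v v ≤ B ^ 2 + N - Y ⬝ᵥ (A⁻¹ *ᵥ Y) := by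
    rw [hQvv, real_inner_self_eq_norm_sq]
    have h1 : ‖w‖ ^ 2 ≤ B ^ 2 := pow_le_pow_left₀ (norm_nonneg w) hw 2
    have h2 : c * (ε ⬝ᵥ ε) ≤ N := by
      have := mul_le_mul_of_nonneg_left hee (le_of_lt (inv_pos.2 hη2))
      calc c * (ε ⬝ᵥ ε) ≤ c * (N * η ^ 2) := by rw [hc]; exact this
        _ = (N : ℝ) * (c * η ^ 2) := by ring
        _ = N := by rw [hcη, mul_one]
    linarith
  -- finish
  have hQvv0 : 0 ≤ Q v v := hQdiag v
  have hQxx0 : 0 ≤ Q x x := hQdiag x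
  have hE0 : 0 ≤ B ^ 2 + N - Y ⬝ᵥ (A⁻¹ *ᵥ Y) := le_trans hQvv0 hQvv_le
  have hsq : (Q x v) ^ 2 ≤ (B ^ 2 + N - Y ⬝ᵥ (A⁻¹ *ᵥ Y)) * Q x x := by
    calc (Q x v) ^ 2 ≤ Q x x * Q v v := hCS x v
      _ ≤ Q x x * (B ^ 2 + N - Y ⬝ᵥ (A⁻¹ *ᵥ Y)) := mul_le_mul_of_nonneg_left hQvv_le hQxx0
      _ = _ := mul_comm _ _
  have habs : |Q x v| ≤ Real.sqrt (B ^ 2 + N - Y ⬝ᵥ (A⁻¹ *ᵥ Y)) * Real.sqrt (Q x x) := by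
    rw [← Real.sqrt_sq_eq_abs, ← Real.sqrt_mul hE0]
    exact Real.sqrt_le_sqrt hsq
  have hgoal1 : ⟪x, w⟫ - (fun i => ⟪x, ψ i⟫) ⬝ᵥ (A⁻¹ *ᵥ Y) = Q x v := by
    rw [hTx_eq, hQxv]
  have hgoal2 : ⟪x, x⟫ - (fun i => ⟪x, ψ i⟫) ⬝ᵥ (A⁻¹ *ᵥ fun i => ⟪x, ψ i⟫) = Q x x := by
    rw [hTx_eq]
  rw [hgoal1, hgoal2]
  exact habs


/-- Theorem 1, part 1, concrete form for a fixed dataset: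
With GP posterior setups for the convergence index `g(θ) = ⟪φ_g(θ), w_g⟫` and
the safety index `s(θ) = ⟪φ_s(θ), w_s⟫` (RKHS norm bounds `B_g`, `B_s`, noisy
observations with noise bounded by `η_g`, `η_s`, and confidence widths
`β_g = √(B_g² + N − (Y^g)ᵀ (K_g + η_g² I)⁻¹ Y^g)` and analogously `β_s`),
every `θ` with `μ_g(θ) − β_g σ_g(θ) > 0` and `μ_s(θ) − β_s σ_s(θ) > 0`
satisfies `g(θ) > 0` and `s(θ) > 0`. -/
theorem gp_safe_convergent_parameter_set
    {Θ : Type*} [Nonempty Θ]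
    {Eg : Type*} [NormedAddCommGroup Eg] [InnerProductSpace ℝ Eg] [CompleteSpace Eg]
    {Es : Type*} [NormedAddCommGroup Es] [InnerProductSpace ℝ Es] [CompleteSpace Es]
    (φg : Θ → Eg) (φs : Θ → Es)
    (kg : Θ → Θ → ℝ) (hkg : ∀ θ θ' : Θ, kg θ θ' = ⟪φg θ, φg θ'⟫)
    (ks : Θ → Θ → ℝ) (hks : ∀ θ θ' : Θ, ks θ θ' = ⟪φs θ, φs θ'⟫)
    (wg : Eg) (ws : Es) (Bg Bs : ℝ) (hwg : ‖wg‖ ≤ Bg) (hws : ‖ws‖ ≤ Bs)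
    (g s : Θ → ℝ)
    (hg : ∀ θ, g θ = ⟪φg θ, wg⟫) (hs : ∀ θ, s θ = ⟪φs θ, ws⟫)
    {N : ℕ} (θi : Fin N → Θ)
    (Kg : Matrix (Fin N) (Fin N) ℝ) (hKg : ∀ i j, Kg i j = kg (θi i) (θi j))
    (Ks : Matrix (Fin N) (Fin N) ℝ) (hKs : ∀ i j, Ks i j = ks (θi i) (θi j))
    (kstarg : Θ → Fin N → ℝ) (hkstarg : ∀ θ i, kstarg θ i = kg θ (θi i))
    (kstars : Θ → Fin N → ℝ) (hkstars : ∀ θ i, kstars θ i = ks θ (θi i))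
    (ηg ηs : ℝ) (hηg : 0 < ηg) (hηs : 0 < ηs)
    (Yg Ys : Fin N → ℝ) (εg εs : Fin N → ℝ)
    (hεg : ∀ i, |εg i| ≤ ηg) (hεs : ∀ i, |εs i| ≤ ηs)
    (hYg : ∀ i, Yg i = g (θi i) + εg i) (hYs : ∀ i, Ys i = s (θi i) + εs i)
    (μg μs σg σs : Θ → ℝ)
    (hμg : ∀ θ, μg θ = kstarg θ ⬝ᵥ ((Kg + ηg ^ 2 • 1)⁻¹ *ᵥ Yg))
    (hμs : ∀ θ, μs θ = kstars θ ⬝ᵥ ((Ks + ηs ^ 2 • 1)⁻¹ *ᵥ Ys))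
    (hσg : ∀ θ, σg θ =
      Real.sqrt (kg θ θ - kstarg θ ⬝ᵥ ((Kg + ηg ^ 2 • 1)⁻¹ *ᵥ kstarg θ)))
    (hσs : ∀ θ, σs θ =
      Real.sqrt (ks θ θ - kstars θ ⬝ᵥ ((Ks + ηs ^ 2 • 1)⁻¹ *ᵥ kstars θ)))
    (βg βs : ℝ)
    (hβg : βg = Real.sqrt (Bg ^ 2 + N - Yg ⬝ᵥ ((Kg + ηg ^ 2 • 1)⁻¹ *ᵥ Yg)))
    (hβs : βs = Real.sqrt (Bs ^ 2 + N - Ys ⬝ᵥ ((Ks + ηs ^ 2 • 1)⁻¹ *ᵥ Ys))) :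
    ∀ θ : Θ, 0 < μg θ - βg * σg θ → 0 < μs θ - βs * σs θ →
      0 < g θ ∧ 0 < s θ := by
  intro θ hgθ hsθ
  constructor
  · have hg1 : ∀ i, Yg i = ⟪φg (θi i), wg⟫ + εg i := fun i => by rw [hYg i, hg]
    have hK1 : ∀ i j, Kg i j = ⟪φg (θi i), φg (θi j)⟫ := fun i j => by rw [hKg, hkg]
    have hb := gp_abs_bound (fun i => φg (θi i)) (φg θ) wg Bg ηg hwg hηg Yg εg hεg hg1 Kg hK1
    have hks1 : (fun i => (⟪φg θ, φg (θi i)⟫ : ℝ)) = kstarg θ := by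
      funext i; rw [hkstarg, hkg]
    rw [hks1, ← hg θ, ← hμg θ, ← hβg] at hb
    have h2 : Real.sqrt (⟪φg θ, φg θ⟫ - kstarg θ ⬝ᵥ ((Kg + ηg ^ 2 • 1)⁻¹ *ᵥ kstarg θ)) = σg θ := by
      rw [hσg θ, hkg]
    rw [h2] at hb
    have h3 := (abs_le.mp hb).1
    linarith
  · have hs1 : ∀ i, Ys i = ⟪φs (θi i), ws⟫ + εs i := fun i => by rw [hYs i, hs]
    have hK1 : ∀ i j, Ks i j = ⟪φs (θi i), φs (θi j)⟫ := fun i j => by rw [hKs, hks]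
    have hb := gp_abs_bound (fun i => φs (θi i)) (φs θ) ws Bs ηs hws hηs Ys εs hεs hs1 Ks hK1
    have hks1 : (fun i => (⟪φs θ, φs (θi i)⟫ : ℝ)) = kstars θ := by
      funext i; rw [hkstars, hks]
    rw [hks1, ← hs θ, ← hμs θ, ← hβs] at hb
    have h2 : Real.sqrt (⟪φs θ, φs θ⟫ - kstars θ ⬝ᵥ ((Ks + ηs ^ 2 • 1)⁻¹ *ᵥ kstars θ)) = σs θ := by
      rw [hσs θ, hks]
    rw [h2] at hb
    have h3 := (abs_le.mp hb).1
    linarith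
end
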